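/- Let Φ=(f_1,…,f_n) be a polynomial automorphism of K^n, with deg_1 the standard homogeneous degree. If P ∈ K[x_1,…,x_n] satisfies deg_1(P∘Φ) = 1, then either P is affine (i.e. deg_1(P) ≤ 1) or P̃ belongs to the ideal of relations I. -/

import Mathlib

open MvPolynomial

/-- Leading term of a polynomial with respect to the standard homogeneous degree. -/
noncomputable def ltStd {K : Type*} [CommSemiring K] {n : ℕ}
    (p : MvPolynomial (Fin n) K) : MvPolynomial (Fin n) K :=
  homogeneousComponent p.totalDegree p

/-- Leading term of a polynomial with respect to the weighted homogeneous degree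
with weights `w`. -/
noncomputable def ldt {K : Type*} [CommSemiring K] {n : ℕ} (w : Fin n → ℕ)
    (p : MvPolynomial (Fin n) K) : MvPolynomial (Fin n) K :=
  weightedHomogeneousComponent w (weightedTotalDegree w p) p

/-- The ideal of relations between the leading terms (for the standard degree) of the
components of an automorphism. -/
noncomputable def relIdealStd {K : Type*} [CommRing K] {n : ℕ}
    (f : Fin n → MvPolynomial (Fin n) K) : Ideal (MvPolynomial (Fin n) K) :=
  RingHom.ker
    (aeval (fun i => ltStd (f i)) : MvPolynomial (Fin n) K →ₐ[K] MvPolynomial (Fin n) K)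

section Aux

variable {R : Type*} [CommSemiring R] {σ : Type*} [DecidableEq σ]

theorem aux_hc_mul {p q : MvPolynomial σ R} {a b : ℕ}
    (hp : p.totalDegree ≤ a) (hq : q.totalDegree ≤ b) :
    homogeneousComponent (a + b) (p * q) =
      homogeneousComponent a p * homogeneousComponent b q := by
  ext d
  rw [coeff_homogeneousComponent]
  by_cases hd : Finsupp.degree d = a + b
  · rw [if_pos hd, coeff_mul, coeff_mul]
    refine Finset.sum_congr rfl fun uv huv => ?_
    rw [Finset.HasAntidiagonal.mem_antidiagonal] at huv
    have hdeg : Finsupp.degree uv.1 + Finsupp.degree uv.2 = a + b := by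
      rw [← hd, ← huv]
      simp [Finsupp.degree_eq_weight_one, map_add]
    rw [coeff_homogeneousComponent, coeff_homogeneousComponent]
    by_cases hu : Finsupp.degree uv.1 = a
    · have hv : Finsupp.degree uv.2 = b := by omega
      rw [if_pos hu, if_pos hv]
    · have e1 : Finsupp.degree uv.1 = ∑ i ∈ uv.1.support, uv.1 i := rfl
      have e2 : Finsupp.degree uv.2 = ∑ i ∈ uv.2.support, uv.2 i := rfl
      have h1 : MvPolynomial.coeff uv.1 p = 0 ∨ MvPolynomial.coeff uv.2 q = 0 := by
        rcases Nat.lt_or_ge a (Finsupp.degree uv.1) with h | h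
        · exact Or.inl (coeff_eq_zero_of_totalDegree_lt (by omega))
        · exact Or.inr (coeff_eq_zero_of_totalDegree_lt (by omega))
      rcases h1 with h1 | h1 <;> simp [h1, hu]
  · rw [if_neg hd]
    exact (((homogeneousComponent_isHomogeneous a p).mul
      (homogeneousComponent_isHomogeneous b q)).coeff_eq_zero hd).symm

theorem aux_hc_pow {p : MvPolynomial σ R} {a : ℕ} (hp : p.totalDegree ≤ a) :
    ∀ k : ℕ, homogeneousComponent (k * a) (p ^ k) = homogeneousComponent a p ^ k
  | 0 => by simp
  | (k + 1) => by
      rw [pow_succ, Nat.succ_mul,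
        aux_hc_mul ((totalDegree_pow p k).trans (Nat.mul_le_mul le_rfl hp)) hp,
        aux_hc_pow hp k, pow_succ]

theorem aux_hc_prod {ι : Type*} (s : Finset ι) (g : ι → MvPolynomial σ R) (a : ι → ℕ)
    (h : ∀ i ∈ s, (g i).totalDegree ≤ a i) :
    homogeneousComponent (∑ i ∈ s, a i) (∏ i ∈ s, g i) =
      ∏ i ∈ s, homogeneousComponent (a i) (g i) := by
  classical
  induction s using Finset.cons_induction with
  | empty => simp
  | cons i s hi ih =>
    rw [Finset.prod_cons, Finset.sum_cons,
      aux_hc_mul (h i (Finset.mem_cons_self i s))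
        ((totalDegree_finset_prod s g).trans
          (Finset.sum_le_sum fun j hj => h j (Finset.mem_cons_of_mem hj))),
      ih fun j hj => h j (Finset.mem_cons_of_mem hj), Finset.prod_cons]

end Aux

theorem aux_key {K : Type*} [CommSemiring K] {n : ℕ} (f : Fin n → MvPolynomial (Fin n) K)
    (P : MvPolynomial (Fin n) K) :
    homogeneousComponent (weightedTotalDegree (fun i => (f i).totalDegree) P) (aeval f P)
      = aeval (fun i => ltStd (f i)) (ldt (fun i => (f i).totalDegree) P) := by
  classical
  rw [ldt, weightedHomogeneousComponent_apply, map_sum, Finset.sum_filter,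
    aeval_def, eval₂_eq, map_sum]
  refine Finset.sum_congr rfl fun m hm => ?_
  rw [algebraMap_eq, homogeneousComponent_C_mul]
  by_cases hmD : Finsupp.weight (fun i => (f i).totalDegree) m
      = weightedTotalDegree (fun i => (f i).totalDegree) P
  · rw [if_pos hmD, aeval_monomial, algebraMap_eq]
    congr 1
    have hDm : weightedTotalDegree (fun i => (f i).totalDegree) P
        = ∑ i ∈ m.support, m i * (f i).totalDegree := by
      rw [← hmD, Finsupp.weight_apply, Finsupp.sum]
      simp [smul_eq_mul]
    rw [hDm, aux_hc_prod m.support (fun i => f i ^ m i) (fun i => m i * (f i).totalDegree)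
      (fun i _ => totalDegree_pow (f i) (m i))]
    rw [Finsupp.prod]
    exact Finset.prod_congr rfl fun i _ => aux_hc_pow le_rfl (m i)
  · rw [if_neg hmD]
    refine mul_eq_zero_of_right _ ?_
    apply homogeneousComponent_eq_zero
    calc (∏ i ∈ m.support, f i ^ m i).totalDegree
        ≤ ∑ i ∈ m.support, (f i ^ m i).totalDegree := totalDegree_finset_prod _ _
      _ ≤ ∑ i ∈ m.support, m i * (f i).totalDegree :=
          Finset.sum_le_sum fun i _ => totalDegree_pow (f i) (m i)
      _ = Finsupp.weight (fun i => (f i).totalDegree) m := by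
          rw [Finsupp.weight_apply, Finsupp.sum]; simp [smul_eq_mul]
      _ < weightedTotalDegree (fun i => (f i).totalDegree) P :=
          lt_of_le_of_ne (le_weightedTotalDegree _ hm) hmD

/-- Corollary: if `deg₁(P∘Φ) = 1` then either `P` is affine or its `deg₂`-leading term
lies in the ideal of relations. -/
theorem stmt8 {K : Type*} [Field K] [IsAlgClosed K] [CharZero K]
    {n : ℕ} (f : Fin n → MvPolynomial (Fin n) K)
    (hf : Function.Bijective
      ⇑(aeval f : MvPolynomial (Fin n) K →ₐ[K] MvPolynomial (Fin n) K))
    (P : MvPolynomial (Fin n) K)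
    (hP : (aeval f P).totalDegree = 1) :
    P.totalDegree ≤ 1 ∨ ldt (fun i => (f i).totalDegree) P ∈ relIdealStd f := by
  classical
  by_cases hker : aeval (fun i => ltStd (f i)) (ldt (fun i => (f i).totalDegree) P) = 0
  · exact Or.inr hker
  left
  -- the weighted total degree is at most 1
  have hD : weightedTotalDegree (fun i => (f i).totalDegree) P ≤ 1 := by
    by_contra h1
    push_neg at h1
    have h0 : homogeneousComponent (weightedTotalDegree (fun i => (f i).totalDegree) P)
        (aeval f P) = 0 :=
      homogeneousComponent_eq_zero _ _ (by rw [hP]; exact h1)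
    rw [aux_key f P] at h0
    exact hker h0
  -- each component of an automorphism has positive degree
  have hw : ∀ i, 1 ≤ (f i).totalDegree := by
    intro i
    by_contra hle
    push_neg at hle
    have hdeg : (f i).totalDegree = 0 := Nat.lt_one_iff.mp hle
    have hC : f i = C (MvPolynomial.coeff 0 (f i)) := by
      have h2 := homogeneousComponent_of_mem
        (m := 0) ((totalDegree_zero_iff_isHomogeneous _).mp hdeg)
      rw [if_pos rfl, homogeneousComponent_zero] at h2
      exact h2.symm
    set e := AlgEquiv.ofBijective (aeval f : MvPolynomial (Fin n) K →ₐ[K] MvPolynomial (Fin n) K) hf with he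
    have hX : (X i : MvPolynomial (Fin n) K) = C (MvPolynomial.coeff 0 (f i)) := by
      have h3 : e (X i) = f i := aeval_X f i
      have h4 : (X i : MvPolynomial (Fin n) K) = e.symm (f i) := by
        rw [← h3, AlgEquiv.symm_apply_apply]
      conv_lhs => rw [h4, hC]
      rw [← algebraMap_eq, AlgEquiv.commutes, algebraMap_eq]
    have := congrArg totalDegree hX
    rw [totalDegree_X, totalDegree_C] at this
    exact one_ne_zero this
  -- conclude
  refine le_trans ?_ hD
  rw [totalDegree]
  apply Finset.sup_le
  intro m hm
  refine le_trans ?_ (le_weightedTotalDegree _ hm)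
  rw [Finsupp.weight_apply, Finsupp.sum, Finsupp.sum]
  exact Finset.sum_le_sum fun i _ => by
    simpa [smul_eq_mul] using Nat.le_mul_of_pos_right (m i) (hw i)
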